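/- Let ψⁿ, ψ^{n+1} be continuously differentiable functions of space in ℝ³, let vⁿ be a continuously differentiable vector field, let g be a continuous function, and let δt > 0. Suppose (ψ^{n+1} − ψⁿ)/δt + ∇·(ψ^{n+1} vⁿ) = g and ∇·vⁿ = α g pointwise, where α = (ζ_ρ − 1)/ζ_ρ for a constant ζ_ρ ≠ 0. Then with ρᵐ = ψᵐ + ζ_ρ(1 − ψᵐ), the discrete continuity equation (ρ^{n+1} − ρⁿ)/δt + ∇·(ρ^{n+1} vⁿ) = 0 holds pointwise. -/

import Mathlib

noncomputable section
open scoped BigOperators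

/-- `i`-th spatial partial derivative of a scalar field on `ℝ³`. -/
def pd3 (i : Fin 3) (f : (Fin 3 → ℝ) → ℝ) (x : Fin 3 → ℝ) : ℝ :=
  fderiv ℝ f x (Pi.single i 1)

/-- Divergence of a vector field on `ℝ³`. -/
def div3 (u : (Fin 3 → ℝ) → Fin 3 → ℝ) (x : Fin 3 → ℝ) : ℝ :=
  ∑ i, pd3 i (fun y => u y i) x

/-- **Discrete continuity equation for the semi-implicit scheme.**
If `(ψ^{n+1} − ψⁿ)/δt + ∇·(ψ^{n+1} vⁿ) = g` and `∇·vⁿ = α g` pointwise, with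
`α = (ζ_ρ − 1)/ζ_ρ`, then with `ρᵐ = ψᵐ + ζ_ρ(1 − ψᵐ)` the discrete continuity
equation `(ρ^{n+1} − ρⁿ)/δt + ∇·(ρ^{n+1} vⁿ) = 0` holds pointwise. -/
theorem discrete_continuity_equation
    (ζρ : ℝ) (hζρ : ζρ ≠ 0) (α : ℝ) (hα : α = (ζρ - 1) / ζρ)
    (δt : ℝ) (hδt : 0 < δt)
    (ψn ψ1 : (Fin 3 → ℝ) → ℝ) (vn : (Fin 3 → ℝ) → Fin 3 → ℝ)
    (g : (Fin 3 → ℝ) → ℝ)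
    (hψn : ContDiff ℝ 1 ψn) (hψ1 : ContDiff ℝ 1 ψ1)
    (hvn : ∀ j, ContDiff ℝ 1 fun x => vn x j)
    (hg : Continuous g)
    (hphase : ∀ x, (ψ1 x - ψn x) / δt + div3 (fun y => ψ1 y • vn y) x = g x)
    (hdiv : ∀ x, div3 vn x = α * g x) :
    ∀ x,
      ((ψ1 x + ζρ * (1 - ψ1 x)) - (ψn x + ζρ * (1 - ψn x))) / δt
        + div3 (fun y => (ψ1 y + ζρ * (1 - ψ1 y)) • vn y) x = 0 := by
  intro x
  have hd1 : ∀ i, DifferentiableAt ℝ (fun y => ψ1 y * vn y i) x := fun i =>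
    ((hψ1.differentiable one_ne_zero).differentiableAt).mul
      (((hvn i).differentiable one_ne_zero).differentiableAt)
  have hd2 : ∀ i, DifferentiableAt ℝ (fun y => vn y i) x := fun i =>
    ((hvn i).differentiable one_ne_zero).differentiableAt
  have key : ∀ i, pd3 i (fun y => (ψ1 y + ζρ * (1 - ψ1 y)) * vn y i) x
      = (1 - ζρ) * pd3 i (fun y => ψ1 y * vn y i) x + ζρ * pd3 i (fun y => vn y i) x := by
    intro i
    have heq : (fun y => (ψ1 y + ζρ * (1 - ψ1 y)) * vn y i)
        = fun y => (1 - ζρ) * (ψ1 y * vn y i) + ζρ * vn y i := by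
      funext y; ring
    rw [pd3, heq, fderiv_fun_add ((hd1 i).const_mul _) ((hd2 i).const_mul _),
      fderiv_const_mul (hd1 i), fderiv_const_mul (hd2 i)]
    simp [pd3]
  have hdivρ : div3 (fun y => (ψ1 y + ζρ * (1 - ψ1 y)) • vn y) x
      = (1 - ζρ) * div3 (fun y => ψ1 y • vn y) x + ζρ * div3 vn x := by
    simp only [div3, Pi.smul_apply, smul_eq_mul]
    rw [Finset.mul_sum, Finset.mul_sum, ← Finset.sum_add_distrib]
    exact Finset.sum_congr rfl fun i _ => key i
  have h1 := hphase x
  have h2 := hdiv x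
  have hζα : ζρ * α = ζρ - 1 := by rw [hα]; field_simp
  rw [hdivρ, h2]
  have : ((ψ1 x + ζρ * (1 - ψ1 x)) - (ψn x + ζρ * (1 - ψn x))) / δt
      = (1 - ζρ) * ((ψ1 x - ψn x) / δt) := by field_simp; ring
  rw [this]
  linear_combination (1 - ζρ) * h1 + g x * hζα
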